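/- Let Z : [0,∞) → [0,1] be continuous with Z(0) = 1, nonincreasing, satisfying the relaxation equation D_g Z(t) = -λ Z(t) for λ > 0, where D_g Z(t) = d/dt ∫₀ᵗ g(t-τ)Z(τ)dτ - g(t)Z(0) and g ∈ L¹_loc(0,∞) is nonnegative. Then for all t > 0, Z(t) ≤ 1 / (1 + λ t / ‖g‖_{L¹(0,t)}). -/

import Mathlib

open Set MeasureTheory intervalIntegral

/-- Let `Z : [0,∞) → [0,1]` be continuous, nonincreasing, with `Z(0)=1`,
satisfying the relaxation equation `D_g Z = -λZ` for the general Caputo derivative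
`D_g Z(t) = d/dt ∫₀ᵗ g(t-τ)Z(τ)dτ - g(t)Z(0)` with nonnegative locally integrable
kernel `g`.  Then `Z(t) ≤ 1/(1 + λt/‖g‖_{L¹(0,t)})` for all `t > 0`. -/
theorem relaxation_solution_decay (Z g : ℝ → ℝ) (l : ℝ) (hl : 0 < l)
    (hZcont : ContinuousOn Z (Ici 0)) (hZ0 : Z 0 = 1)
    (hZrange : ∀ t : ℝ, 0 ≤ t → Z t ∈ Icc (0:ℝ) 1)
    (hZmono : AntitoneOn Z (Ici 0))
    (hg : ∀ t > (0:ℝ), 0 ≤ g t)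
    (hgint : ∀ t > (0:ℝ), IntegrableOn g (Ioc 0 t))
    (heq : ∀ t > (0:ℝ),
      deriv (fun s : ℝ => ∫ τ in (0:ℝ)..s, g (s - τ) * Z τ) t - g t * Z 0
        = -l * Z t) :
    ∀ t > (0:ℝ), Z t ≤ 1 / (1 + l * t / ∫ s in (0:ℝ)..t, g s) := by
  -- a measurable, everywhere-nonnegative representative of `g` on `(0,∞)`, zero on `(-∞,0]`
  obtain ⟨g₂, hg₂meas, hg₂nonneg, hg₂zero, hg₂ae⟩ :
      ∃ g₂ : ℝ → ℝ, Measurable g₂ ∧ (∀ x, 0 ≤ g₂ x) ∧ (∀ x ≤ (0:ℝ), g₂ x = 0) ∧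
        (∀ᵐ x, x ∈ Ioi (0:ℝ) → g₂ x = g x) := by
    have hU : Ioi (0:ℝ) = ⋃ n : ℕ, Ioc 0 ((n:ℝ)+1) := by
      ext x; simp only [mem_Ioi, mem_iUnion, mem_Ioc]
      constructor
      · intro hx
        obtain ⟨n, hn⟩ := exists_nat_gt x
        exact ⟨n, hx, by linarith⟩
      · rintro ⟨n, hx, -⟩; exact hx
    have hmeas : AEStronglyMeasurable g (volume.restrict (Ioi (0:ℝ))) := by
      rw [hU]
      exact aestronglyMeasurable_iUnion_iff.2 fun n =>
        (hgint ((n:ℝ)+1) (by positivity)).1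
    set g₁ := hmeas.mk g with hg₁
    refine ⟨fun x => if 0 < x then max (g₁ x) 0 else 0, ?_, ?_, ?_, ?_⟩
    · exact Measurable.ite measurableSet_Ioi (hmeas.stronglyMeasurable_mk.measurable.max
        measurable_const) measurable_const
    · intro x; by_cases hx : 0 < x <;> simp [hx, le_max_right]
    · intro x hx; simp [not_lt.2 hx]
    · have := (ae_restrict_iff' measurableSet_Ioi).1 hmeas.ae_eq_mk
      filter_upwards [this] with x hx hx0
      rw [if_pos (show (0:ℝ) < x from hx0)]
      show max (AEStronglyMeasurable.mk g hmeas x) 0 = g x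
      rw [← hx hx0]
      exact max_eq_left (hg x hx0)
  -- integrability of g₂ on all bounded intervals
  have hg₂int : ∀ a b : ℝ, IntegrableOn g₂ (Ioc a b) := by
    intro a b
    rcases le_or_gt b 0 with hb | hb
    · have : EqOn g₂ (fun _ => (0:ℝ)) (Ioc a b) := fun x hx =>
        hg₂zero x (hx.2.trans hb)
      exact (integrableOn_zero).congr_fun (fun x hx => (this hx).symm) measurableSet_Ioc
    · have h1 : IntegrableOn g₂ (Ioc 0 b) := by
        refine Integrable.congr (hgint b hb) ?_
        refine (ae_restrict_iff' measurableSet_Ioc).2 ?_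
        filter_upwards [hg₂ae] with x hx hx2
        exact (hx hx2.1).symm
      have h2 : IntegrableOn g₂ (Ioc a 0) := by
        have : EqOn g₂ (fun _ => (0:ℝ)) (Ioc a 0) := fun x hx => hg₂zero x hx.2
        exact (integrableOn_zero).congr_fun (fun x hx => (this hx).symm) measurableSet_Ioc
      refine ((h2.union h1).mono_set ?_)
      intro x hx
      rcases le_or_gt x 0 with h | h
      · exact Or.inl ⟨hx.1, h⟩
      · exact Or.inr ⟨h, hx.2⟩
  have hg₂ii : ∀ a b : ℝ, IntervalIntegrable g₂ volume a b := fun a b =>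
    ⟨hg₂int a b, hg₂int b a⟩
  -- the primitive of g₂
  set G : ℝ → ℝ := fun s => ∫ u in (0:ℝ)..s, g₂ u with hGdef
  have hGcont : Continuous G := intervalIntegral.continuous_primitive hg₂ii 0
  have hGmono : Monotone G := by
    intro s₁ s₂ h
    have hsub : G s₂ - G s₁ = ∫ u in s₁..s₂, g₂ u :=
      intervalIntegral.integral_interval_sub_left (hg₂ii 0 s₂) (hg₂ii 0 s₁)
    have : 0 ≤ ∫ u in s₁..s₂, g₂ u :=
      intervalIntegral.integral_nonneg h (fun u _ => hg₂nonneg u)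
    linarith
  -- equality with the integral of g appearing in the statement
  have hGt_eq : ∀ t : ℝ, 0 < t → G t = ∫ s in (0:ℝ)..t, g s := by
    intro t ht
    refine intervalIntegral.integral_congr_ae ?_
    filter_upwards [hg₂ae] with x hx hx2
    rw [Set.uIoc_of_le ht.le] at hx2
    exact hx hx2.1
  -- integrability of products with Z-values
  have key_int : ∀ b c : ℝ, 0 ≤ b → b ≤ c →
      IntegrableOn (fun u => g₂ u * Z (c - u)) (Ioc 0 b) := by
    intro b c hb hbc
    have hZm : AEStronglyMeasurable (fun u => Z (c - u)) (volume.restrict (Ioc 0 b)) := by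
      refine ContinuousOn.aestronglyMeasurable ?_ measurableSet_Ioc
      refine hZcont.comp ((continuous_const.sub continuous_id).continuousOn) ?_
      intro u hu
      simp only [mem_Ici]
      have := hu.2
      linarith
    have hb1 : ∀ᵐ u ∂(volume.restrict (Ioc 0 b)), ‖Z (c - u)‖ ≤ 1 := by
      refine (ae_restrict_iff' measurableSet_Ioc).2 ?_
      refine Filter.Eventually.of_forall (fun u hu => ?_)
      have h1 : (0:ℝ) ≤ c - u := by have := hu.2; linarith
      have h2 := hZrange (c - u) h1
      rw [Real.norm_eq_abs]
      exact abs_le.2 ⟨by linarith [h2.1], h2.2⟩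
    have := Integrable.bdd_mul (hg₂int 0 b) hZm hb1
    exact this.congr (Filter.EventuallyEq.of_eq (funext fun u => mul_comm _ _))
  have key_ii : ∀ b c : ℝ, 0 ≤ b → b ≤ c →
      IntervalIntegrable (fun u => g₂ u * Z (c - u)) volume 0 b := by
    intro b c hb hbc
    refine ⟨key_int b c hb hbc, ?_⟩
    rw [Set.Ioc_eq_empty (by exact not_lt.2 hb)]
    exact integrableOn_empty
  -- the convolution F, rewritten with g₂
  set F : ℝ → ℝ := fun s => ∫ τ in (0:ℝ)..s, g (s - τ) * Z τ with hFdef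
  have hFeq : ∀ s : ℝ, 0 ≤ s → F s = ∫ u in (0:ℝ)..s, g₂ u * Z (s - u) := by
    intro s hs
    have h1 : F s = ∫ τ in (0:ℝ)..s, (fun u => g u * Z (s - u)) (s - τ) := by
      refine intervalIntegral.integral_congr (fun τ _ => ?_)
      simp only
      ring_nf
    rw [h1, intervalIntegral.integral_comp_sub_left (fun u => g u * Z (s - u)) s,
      sub_self, sub_zero]
    refine intervalIntegral.integral_congr_ae ?_
    filter_upwards [hg₂ae] with x hx hx2
    rw [Set.uIoc_of_le hs] at hx2
    rw [hx hx2.1]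
  -- the monotone function H = G - F (extended by 0 to the left)
  set H : ℝ → ℝ := fun s => G (max s 0) - F (max s 0) with hHdef
  have hGFsplit : ∀ a c : ℝ, 0 ≤ a → a ≤ c →
      (∫ u in (0:ℝ)..a, g₂ u * (1 - Z (c - u))) =
        G a - ∫ u in (0:ℝ)..a, g₂ u * Z (c - u) := by
    intro a c ha hac
    have : (∫ u in (0:ℝ)..a, g₂ u * (1 - Z (c - u)))
        = ∫ u in (0:ℝ)..a, (g₂ u - g₂ u * Z (c - u)) := by
      refine intervalIntegral.integral_congr (fun u _ => ?_)
      ring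
    rw [this, intervalIntegral.integral_sub (hg₂ii 0 a) (key_ii a c ha hac)]
  have hHmono : Monotone H := by
    intro s₁ s₂ h
    set a := max s₁ 0 with hadef
    set b := max s₂ 0 with hbdef
    have ha : 0 ≤ a := le_max_right _ _
    have hb : 0 ≤ b := le_max_right _ _
    have hab : a ≤ b := max_le_max h le_rfl
    have e1 : H s₁ = ∫ u in (0:ℝ)..a, g₂ u * (1 - Z (a - u)) := by
      rw [hHdef]
      simp only
      rw [hGFsplit a a ha le_rfl, hFeq a ha]
    have e2 : H s₂ = ∫ u in (0:ℝ)..b, g₂ u * (1 - Z (b - u)) := by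
      rw [hHdef]
      simp only
      rw [hGFsplit b b hb le_rfl, hFeq b hb]
    rw [e1, e2]
    have hii1 : IntervalIntegrable (fun u => g₂ u * (1 - Z (a - u))) volume 0 a := by
      have := (hg₂ii 0 a).sub (key_ii a a ha le_rfl)
      refine this.congr ?_
      refine fun u _ => ?_
      ring
    have hii2 : IntervalIntegrable (fun u => g₂ u * (1 - Z (b - u))) volume 0 a := by
      have := (hg₂ii 0 a).sub (key_ii a b ha hab)
      refine this.congr ?_
      refine fun u _ => ?_
      ring
    have step1 : (∫ u in (0:ℝ)..a, g₂ u * (1 - Z (a - u)))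
        ≤ ∫ u in (0:ℝ)..a, g₂ u * (1 - Z (b - u)) := by
      refine intervalIntegral.integral_mono_on ha hii1 hii2 (fun u hu => ?_)
      have h1 : (0:ℝ) ≤ a - u := by have := hu.2; linarith
      have h2 : a - u ≤ b - u := by linarith
      have := hZmono (mem_Ici.2 h1) (mem_Ici.2 (h1.trans h2)) h2
      have := hg₂nonneg u
      nlinarith
    have step2 : (∫ u in (0:ℝ)..a, g₂ u * (1 - Z (b - u)))
        ≤ ∫ u in (0:ℝ)..b, g₂ u * (1 - Z (b - u)) := by
      have hii3 : IntervalIntegrable (fun u => g₂ u * (1 - Z (b - u))) volume 0 b := by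
        have := (hg₂ii 0 b).sub (key_ii b b hb le_rfl)
        refine this.congr ?_
        refine fun u _ => ?_
        ring
      have hsub : (∫ u in (0:ℝ)..b, g₂ u * (1 - Z (b - u)))
          - (∫ u in (0:ℝ)..a, g₂ u * (1 - Z (b - u)))
          = ∫ u in a..b, g₂ u * (1 - Z (b - u)) :=
        intervalIntegral.integral_interval_sub_left hii3 hii2
      have hnn : 0 ≤ ∫ u in a..b, g₂ u * (1 - Z (b - u)) := by
        refine intervalIntegral.integral_nonneg hab (fun u hu => ?_)
        have h1 : (0:ℝ) ≤ b - u := by have := hu.2; linarith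
        have h2 := (hZrange (b - u) h1).2
        have := hg₂nonneg u
        nlinarith
      linarith
    exact step1.trans step2
  -- the Stieltjes measure of G is Lebesgue with density g₂
  have hstG : ∀ x : ℝ, hGmono.stieltjesFunction x = G x := by
    intro x
    refine rightLim_eq_of_tendsto ?_
    exact (hGcont.tendsto x).mono_left nhdsWithin_le_nhds
  have hμG : hGmono.stieltjesFunction.measure
      = volume.withDensity (fun x => ENNReal.ofReal (g₂ x)) := by
    refine Measure.ext_of_Ioc _ _ (fun a b hab => ?_)
    rw [StieltjesFunction.measure_Ioc, withDensity_apply _ measurableSet_Ioc,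
      hstG a, hstG b]
    have h1 : G b - G a = ∫ u in a..b, g₂ u :=
      intervalIntegral.integral_interval_sub_left (hg₂ii 0 b) (hg₂ii 0 a)
    have h2 : (∫ u in a..b, g₂ u) = ∫ u in Ioc a b, g₂ u :=
      intervalIntegral.integral_of_le hab.le
    rw [h1, h2]
    exact ofReal_integral_eq_lintegral_ofReal (hg₂int a b)
      (Filter.Eventually.of_forall (fun u => hg₂nonneg u))
  have hrnG : ∀ᵐ x, ((hGmono.stieltjesFunction.measure).rnDeriv volume x).toReal = g₂ x := by
    have := Measure.rnDeriv_withDensity volume (hg₂meas.ennreal_ofReal)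
    rw [← hμG] at this
    filter_upwards [this] with x hx
    rw [hx, ENNReal.toReal_ofReal (hg₂nonneg x)]
  -- a.e. identity for the derivative of H
  set μH := hHmono.stieltjesFunction.measure with hμHdef
  have hae : ∀ᵐ x, x ∈ Ioi (0:ℝ) → (μH.rnDeriv volume x).toReal = l * Z x := by
    filter_upwards [hGmono.ae_hasDerivAt, hHmono.ae_hasDerivAt, hrnG, hg₂ae]
      with x hGd hHd hrn hgg hx
    rw [hrn] at hGd
    have hFd : HasDerivAt F (g₂ x - (μH.rnDeriv volume x).toReal) x := by
      refine (hGd.sub hHd).congr_of_eventuallyEq ?_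
      have hmem : Ioi (0:ℝ) ∈ nhds x := Ioi_mem_nhds hx
      filter_upwards [hmem] with s hs
      show F s = G s - H s
      rw [hHdef]
      simp only [max_eq_left (le_of_lt (mem_Ioi.1 hs))]
      ring
    have hd := hFd.deriv
    have h2 := heq x hx
    rw [hd] at h2
    rw [hgg hx, hZ0] at h2
    linarith
  -- now fix t
  intro t ht
  set Gt := ∫ s in (0:ℝ)..t, g s with hGtdef
  have hG0 : G 0 = 0 := intervalIntegral.integral_same
  have hF0 : F 0 = 0 := intervalIntegral.integral_same
  have hGt : G t = Gt := hGt_eq t ht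
  have hGt0 : 0 ≤ Gt := by rw [← hGt, ← hG0]; exact hGmono ht.le
  have hZii : IntervalIntegrable Z volume 0 t := by
    refine ContinuousOn.intervalIntegrable ?_
    rw [Set.uIcc_of_le ht.le]
    exact hZcont.mono (fun x hx => hx.1)
  have hZlow : t * Z t ≤ ∫ s in (0:ℝ)..t, Z s := by
    have hconst : (∫ _ in (0:ℝ)..t, Z t) = t * Z t := by
      simp [intervalIntegral.integral_const]
    rw [← hconst]
    refine intervalIntegral.integral_mono_on ht.le intervalIntegrable_const hZii
      (fun s hs => ?_)
    exact hZmono (mem_Ici.2 hs.1) (mem_Ici.2 (hs.1.trans hs.2)) hs.2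
  have hstep1 : l * ∫ s in (0:ℝ)..t, Z s ≤ (μH (Ioc 0 t)).toReal := by
    have e1 : l * ∫ s in (0:ℝ)..t, Z s = ∫ x in Ioc 0 t, l * Z x := by
      rw [intervalIntegral.integral_of_le ht.le]
      exact (MeasureTheory.integral_const_mul l Z).symm
    have e2 : (∫ x in Ioc 0 t, l * Z x)
        = ∫ x in Ioc 0 t, (μH.rnDeriv volume x).toReal := by
      refine setIntegral_congr_ae measurableSet_Ioc ?_
      filter_upwards [hae] with x hx hx2
      exact (hx hx2.1).symm
    have e3 : (∫ x in Ioc 0 t, (μH.rnDeriv volume x).toReal)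
        = (∫⁻ x in Ioc 0 t, μH.rnDeriv volume x).toReal := by
      refine integral_toReal ((Measure.measurable_rnDeriv μH volume).aemeasurable.restrict) ?_
      exact ae_restrict_of_ae (Measure.rnDeriv_lt_top μH volume)
    have e4 : (∫⁻ x in Ioc 0 t, μH.rnDeriv volume x) ≤ μH (Ioc 0 t) := by
      have h := Measure.withDensity_rnDeriv_le μH volume
      have h2 := h (Ioc 0 t)
      rwa [withDensity_apply _ measurableSet_Ioc] at h2
    rw [e1, e2, e3]
    exact ENNReal.toReal_mono (measure_Ioc_lt_top).ne e4
  have hstep2 : ∀ s' : ℝ, t < s' → (μH (Ioc 0 t)).toReal ≤ H s' := by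
    intro s' hs'
    rw [hμHdef, StieltjesFunction.measure_Ioc]
    have hmono' : hHmono.stieltjesFunction 0 ≤ hHmono.stieltjesFunction t :=
      hHmono.stieltjesFunction.mono ht.le
    have h1 : hHmono.stieltjesFunction t ≤ H s' := hHmono.rightLim_le hs'
    have h2 : H 0 ≤ hHmono.stieltjesFunction 0 := hHmono.le_rightLim le_rfl
    have hH0 : H 0 = 0 := by
      rw [hHdef]
      simp only [max_self]
      rw [hG0, hF0]
      ring
    rw [ENNReal.toReal_ofReal (by linarith)]
    linarith
  have hstep3 : ∀ s' : ℝ, 0 ≤ s' → Z s' * G s' ≤ F s' := by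
    intro s' hs'
    rw [hFeq s' hs']
    have hconst : (∫ u in (0:ℝ)..s', g₂ u * Z s') = G s' * Z s' :=
      intervalIntegral.integral_mul_const _ _
    have hmain : (∫ u in (0:ℝ)..s', g₂ u * Z s')
        ≤ ∫ u in (0:ℝ)..s', g₂ u * Z (s' - u) := by
      refine intervalIntegral.integral_mono_on hs' ((hg₂ii 0 s').mul_const _)
        (key_ii s' s' hs' le_rfl) (fun u hu => ?_)
      have h1 : (0:ℝ) ≤ s' - u := by linarith [hu.2]
      have h2 : Z s' ≤ Z (s' - u) :=
        hZmono (mem_Ici.2 h1) (mem_Ici.2 hs') (by linarith [hu.1])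
      exact mul_le_mul_of_nonneg_left h2 (hg₂nonneg u)
    calc Z s' * G s' = ∫ u in (0:ℝ)..s', g₂ u * Z s' := by rw [hconst]; ring
      _ ≤ _ := hmain
  have hkey : l * ∫ s in (0:ℝ)..t, Z s ≤ (1 - Z t) * G t := by
    have hZt : Filter.Tendsto Z (nhdsWithin t (Ioi t)) (nhds (Z t)) := by
      have h := (hZcont t (mem_Ici.2 ht.le)).tendsto
      exact h.mono_left (nhdsWithin_mono t (fun x hx => le_of_lt (ht.trans hx)))
    have htend : Filter.Tendsto (fun s' => (1 - Z s') * G s') (nhdsWithin t (Ioi t))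
        (nhds ((1 - Z t) * G t)) :=
      (tendsto_const_nhds.sub hZt).mul ((hGcont.tendsto t).mono_left nhdsWithin_le_nhds)
    refine ge_of_tendsto htend ?_
    filter_upwards [self_mem_nhdsWithin] with s' hs'
    have hs'' : t < s' := hs'
    have h0s' : (0:ℝ) ≤ s' := (ht.trans hs'').le
    have hA := hstep1.trans (hstep2 s' hs'')
    have hB := hstep3 s' h0s'
    have hC : H s' = G s' - F s' := by
      rw [hHdef]
      simp only [max_eq_left h0s']
    have hD : (1 - Z s') * G s' = G s' - Z s' * G s' := by ring
    linarith
  have hlow : l * (t * Z t) ≤ (1 - Z t) * Gt := by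
    rw [← hGt]
    have := mul_le_mul_of_nonneg_left hZlow hl.le
    linarith
  rcases eq_or_lt_of_le hGt0 with hGz | hGz
  · rw [← hGz]
    simpa using (hZrange t ht.le).2
  · have hpos : 0 < Gt + l * t := by
      have := mul_pos hl ht
      linarith
    have e : 1 + l * t / Gt = (Gt + l * t) / Gt := by field_simp
    rw [e, one_div_div, le_div_iff₀ hpos]
    nlinarith [(hZrange t ht.le).1]
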